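/- arXiv:0907.2857 — 5 statements merged into one kernel-verified Lean document; each statement's English description precedes it below -/
import Mathlib

section
/- Let R be a commutative Noetherian ring of prime characteristic p, let R[x,f] be the Frobenius skew polynomial ring, let H be a left R[x,f]-module, let a ∈ R, and let b be an ideal of R generated by elements b₁, …, b_w. Then H is b-testable if and only if H is b_i-testable for every i = 1, …, w. -/
/-- `R°`: the complement of the union of the minimal primes of `R`. -/
def Rcirc (R : Type) [CommRing R] : Set R := {c | ∀ P ∈ minimalPrimes R, c ∉ P}

/-- A left `R[x,f]`-module (encoded by the `R`-module `H` and the action `X` of `x`)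
is `a`-testable if whenever `h ∈ H` and `c ∈ R°` satisfy `c·x^n·h = 0` for all `n ≫ 0`,
then `a·x^n·h = 0` for all `n ≥ 0`. -/
def IsTestable (R : Type) [CommRing R] {H : Type} [AddCommGroup H] [Module R H]
    (X : H →+ H) (a : R) : Prop :=
  ∀ (h : H) (c : R), c ∈ Rcirc R → (∃ N : ℕ, ∀ n ≥ N, c • (⇑X)^[n] h = 0) →
    ∀ n : ℕ, a • (⇑X)^[n] h = 0

/-- for an ideal `b` generated by `b₁, …, b_w`, a left `R[x,f]`-module `H` is
`b`-testable if and only if it is `b_i`-testable for every `i`. -/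
theorem isTestable_ideal_iff (R : Type) [CommRing R] [IsNoetherianRing R]
    (p : ℕ) [Fact p.Prime] [CharP R p]
    (H : Type) [AddCommGroup H] [Module R H] (X : H →+ H)
    (hX : ∀ (r : R) (h : H), X (r • h) = r ^ p • X h)
    (w : ℕ) (b : Fin w → R) :
    (∀ r ∈ Ideal.span (Set.range b), IsTestable R X r) ↔ ∀ i, IsTestable R X (b i) := by
  constructor
  · intro h i
    exact h (b i) (Ideal.subset_span ⟨i, rfl⟩)
  · intro hb r hr
    induction hr using Submodule.span_induction with
    | mem x hx =>
      obtain ⟨i, rfl⟩ := hx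
      exact hb i
    | zero => intro h c _ _ n; simp
    | add x y _ _ hx hy =>
      intro h c hc hN n
      rw [add_smul, hx h c hc hN n, hy h c hc hN n, add_zero]
    | smul r x _ hx =>
      intro h c hc hN n
      rw [smul_eq_mul, mul_smul, hx h c hc hN n, smul_zero]
end

section
/- Let θ : R → R' be a homomorphism of commutative Noetherian rings of prime characteristic p. Then θ induces a ring homomorphism θ̃ : R[x,f] → R'[x,f] with θ̃(Σ r_i x^i) = Σ θ(r_i) x^i, and for any left R'[x,f]-module H' (viewed as a left R[x,f]-module via θ̃), every special annihilator submodule of H' over R[x,f] is also a special annihilator submodule of H' over R'[x,f], i.e., 𝒜_{R[x,f]}(H') ⊆ 𝒜_{R'[x,f]}(H'). -/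
/- A left `R'[x,f]`-module is encoded by an `R'`-module `H'` together with the action
`X : H' →+ H'` of `x`, satisfying `X (r • h) = r^p • X h`.  A graded two-sided ideal of
`R[x,f]` is encoded by an ascending chain `b : ℕ → Ideal R` (its degree-`i` component being
`bᵢxⁱ`), and the corresponding special annihilator submodule is
`{h | ∀ i, ∀ r ∈ bᵢ, r·xⁱ·h = 0}`.  The `R[x,f]`-action on `H'` is via `θ : R →+* R'`. -/

/-- for a ring homomorphism `θ : R → R'` and a left `R'[x,f]`-module `H'`,
every special annihilator submodule of `H'` over `R[x,f]` is a special annihilator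
submodule of `H'` over `R'[x,f]`, i.e. `𝒜_{R[x,f]}(H') ⊆ 𝒜_{R'[x,f]}(H')`. -/
theorem specialAnnihilator_mem_of_baseChange
    (R R' : Type) [CommRing R] [IsNoetherianRing R] [CommRing R'] [IsNoetherianRing R']
    (p : ℕ) [Fact p.Prime] [CharP R p] [CharP R' p] (θ : R →+* R')
    (H' : Type) [AddCommGroup H'] [Module R' H'] (X : H' →+ H')
    (hX : ∀ (r : R') (h : H'), X (r • h) = r ^ p • X h)
    (G : Set H')
    (hG : ∃ b : ℕ → Ideal R, (∀ i, b i ≤ b (i + 1)) ∧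
      G = {h : H' | ∀ i : ℕ, ∀ r ∈ b i, θ r • (⇑X)^[i] h = 0}) :
    ∃ b' : ℕ → Ideal R', (∀ i, b' i ≤ b' (i + 1)) ∧
      G = {h : H' | ∀ i : ℕ, ∀ r ∈ b' i, r • (⇑X)^[i] h = 0} := by
  obtain ⟨b, hasc, hGdef⟩ := hG
  -- G is stable under X
  have hstab : ∀ h ∈ G, X h ∈ G := by
    intro h hh
    rw [hGdef] at hh ⊢
    intro i r hr
    have := hh (i + 1) r (hasc i hr)
    rwa [Function.iterate_succ_apply] at this
  refine ⟨fun i =>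
    { carrier := {r' : R' | ∀ h ∈ G, r' • (⇑X)^[i] h = 0},
      add_mem' := by intro a c ha hc h hh; simp [add_smul, ha h hh, hc h hh],
      zero_mem' := by intro h hh; simp,
      smul_mem' := by
        intro c r' hr' h hh
        simp only [smul_eq_mul, Set.mem_setOf_eq, mul_smul, hr' h hh, smul_zero] },
    ?_, ?_⟩
  · intro i r' hr' h hh
    rw [Function.iterate_succ_apply]
    exact hr' (X h) (hstab h hh)
  · apply Set.eq_of_subset_of_subset
    · intro h hh i r' hr'
      exact hr' h hh
    · intro h hh
      rw [hGdef]
      intro i r hr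
      refine hh i (θ r) ?_
      intro g hg
      rw [hGdef] at hg
      exact hg i r hr
end

section
/- Let R be a commutative Noetherian ring of prime characteristic p, S a multiplicatively closed subset of R, and ξ : R → S⁻¹R the natural homomorphism. For a left (S⁻¹R)[x,f]-module H' (viewed as left R[x,f]-module via the induced ring map R[x,f] → (S⁻¹R)[x,f]), the sets of special annihilator submodules coincide: 𝒜_{R[x,f]}(H') = 𝒜_{(S⁻¹R)[x,f]}(H'). -/
/- A left `(S⁻¹R)[x,f]`-module is encoded by a `Localization S`-module `H'` with the action
`X : H' →+ H'` of `x` satisfying `X (r • h) = r^p • X h`.  A graded two-sided ideal is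
encoded by an ascending chain of ideals; the induced `R[x,f]`-structure on `H'` is via the
natural map `ξ = algebraMap R (Localization S)`. -/

lemma map_smul_eq_zero_aux {R A M : Type} [CommRing R] [CommRing A] [Algebra R A]
    [AddCommGroup M] [Module A M] (I : Ideal R) (v : M)
    (h : ∀ r ∈ I, algebraMap R A r • v = 0) : ∀ s ∈ I.map (algebraMap R A), s • v = 0 := by
  intro s hs
  refine Submodule.span_induction ?_ ?_ ?_ ?_ hs
  · rintro x ⟨r, hr, rfl⟩; exact h r hr
  · exact zero_smul A v
  · intro a b _ _ ha hb; rw [add_smul, ha, hb, add_zero]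
  · intro a b _ hb; rw [smul_eq_mul, mul_smul, hb, smul_zero]

/-- for a multiplicatively closed subset `S` of `R` and a left
`(S⁻¹R)[x,f]`-module `H'`, the special annihilator submodules of `H'` over `R[x,f]` and
over `(S⁻¹R)[x,f]` coincide: `𝒜_{R[x,f]}(H') = 𝒜_{(S⁻¹R)[x,f]}(H')`. -/
theorem specialAnnihilators_localization_eq
    (R : Type) [CommRing R] [IsNoetherianRing R] (p : ℕ) [Fact p.Prime] [CharP R p]
    (S : Submonoid R)
    (H' : Type) [AddCommGroup H'] [Module (Localization S) H'] (X : H' →+ H')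
    (hX : ∀ (r : Localization S) (h : H'), X (r • h) = r ^ p • X h) :
    {G : Set H' | ∃ b : ℕ → Ideal R, (∀ i, b i ≤ b (i + 1)) ∧
        G = {h : H' | ∀ i : ℕ, ∀ r ∈ b i, algebraMap R (Localization S) r • (⇑X)^[i] h = 0}} =
    {G : Set H' | ∃ b' : ℕ → Ideal (Localization S), (∀ i, b' i ≤ b' (i + 1)) ∧
        G = {h : H' | ∀ i : ℕ, ∀ r ∈ b' i, r • (⇑X)^[i] h = 0}} := by
  ext G
  simp only [Set.mem_setOf_eq]
  constructor
  · rintro ⟨b, hb, rfl⟩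
    refine ⟨fun i => (b i).map (algebraMap R (Localization S)),
      fun i => Ideal.map_mono (hb i), ?_⟩
    ext h
    simp only [Set.mem_setOf_eq]
    constructor
    · intro hh i r hr
      exact map_smul_eq_zero_aux (b i) _ (hh i) r hr
    · intro hh i r hr
      exact hh i _ (Ideal.mem_map_of_mem _ hr)
  · rintro ⟨b', hb', rfl⟩
    refine ⟨fun i => (b' i).comap (algebraMap R (Localization S)),
      fun i => Ideal.comap_mono (hb' i), ?_⟩
    ext h
    simp only [Set.mem_setOf_eq]
    constructor
    · intro hh i r hr
      exact hh i _ hr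
    · intro hh i r hr
      have key := IsLocalization.map_comap S (Localization S) (b' i)
      rw [← key] at hr
      exact map_smul_eq_zero_aux _ _ (hh i) r hr
end

section
/- Let R be a commutative Noetherian ring of prime characteristic p, let W = ⊕_{n≥b} W_n be a graded left R[x,f]-module (b ≥ 1), let (g_i)_{i∈I} be a family of elements of W_b, and let W' = Ext(W; (g_i); 1) be the 1-place extension of W by (g_i). If W is a-testable for some a ∈ R, then W' is a-testable. -/
/-- Iterates of the `x`-action on a graded left `R[x,f]`-module (indexed by `ℕ`, starting
at the bottom degree), from position `n` to position `n + k`. -/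
def XiterN {W : ℕ → Type} [∀ n, AddCommGroup (W n)] (X : ∀ n, W n →+ W (n + 1)) :
    (k : ℕ) → (n : ℕ) → (W n →+ W (n + k))
  | 0, _ => AddMonoidHom.id _
  | (k + 1), n => (X (n + k)).comp (XiterN X k n)

/-- A graded left `R[x,f]`-module is `a`-testable if whenever a (homogeneous) element `h`
and `c ∈ R°` satisfy `c·xᵏ·h = 0` for all `k ≫ 0`, then `a·xᵏ·h = 0` for all `k ≥ 0`. -/
def IsTestableN (R : Type) [CommRing R] {W : ℕ → Type} [∀ n, AddCommGroup (W n)]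
    [∀ n, Module R (W n)] (X : ∀ n, W n →+ W (n + 1)) (a : R) : Prop :=
  ∀ (n : ℕ) (h : W n) (c : R), c ∈ Rcirc R →
    (∃ N : ℕ, ∀ k ≥ N, c • XiterN X k n h = 0) → ∀ k : ℕ, a • XiterN X k n h = 0

section cstAux
variable {W' : ℕ → Type} [∀ n, AddCommGroup (W' n)]

def cstW {n n' : ℕ} (h : n = n') : W' n → W' n' := fun w => h ▸ w

lemma cstW_refl {n : ℕ} (h : n = n) (w : W' n) : cstW h w = w := rfl

lemma cstW_zero {n n' : ℕ} (h : n = n') : (cstW h (0 : W' n)) = 0 := by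
  subst h; rfl

lemma cstW_eq_zero {n n' : ℕ} (h : n = n') (w : W' n) : cstW h w = 0 ↔ w = 0 := by
  subst h; exact Iff.rfl

lemma cstW_smul {R : Type} [CommRing R] [∀ n, Module R (W' n)] {n n' : ℕ} (h : n = n')
    (r : R) (w : W' n) : cstW h (r • w) = r • cstW h w := by subst h; rfl

lemma cstW_X (X' : ∀ n, W' n →+ W' (n + 1)) {n n' : ℕ} (h : n = n') (w : W' n) :
    cstW (congrArg (· + 1) h) (X' n w) = X' n' (cstW h w) := by subst h; rfl

lemma XiterN_succ' (X' : ∀ n, W' n →+ W' (n + 1)) (k n : ℕ) (w : W' n) :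
    XiterN X' (k + 1) n w = cstW (show n + 1 + k = n + (k + 1) by omega)
      (XiterN X' k (n + 1) (X' n w)) := by
  induction k with
  | zero => exact (cstW_refl _ _).symm
  | succ k ih =>
      show X' (n + (k+1)) (XiterN X' (k+1) n w) = _
      rw [ih]
      have := cstW_X X' (show n + 1 + k = n + (k + 1) by omega)
        (XiterN X' k (n+1) (X' n w))
      rw [← this]
      rfl
end cstAux

section transferAux
variable {R : Type} [CommRing R] {W W' : ℕ → Type}
  [∀ n, AddCommGroup (W n)] [∀ n, Module R (W n)]
  [∀ n, AddCommGroup (W' n)] [∀ n, Module R (W' n)]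

lemma etransfer (X : ∀ n, W n →+ W (n + 1)) (X' : ∀ n, W' n →+ W' (n + 1))
    (e : ∀ k, W' (k + 1) ≃ₗ[R] W k)
    (he : ∀ (k : ℕ) (w : W' (k + 1)), e (k + 1) (X' (k + 1) w) = X k (e k w))
    (k m : ℕ) (h : W' (m + 1)) :
    e (m + k) (cstW (show m + 1 + k = m + k + 1 by omega) (XiterN X' k (m + 1) h))
      = XiterN X k m (e m h) := by
  induction k with
  | zero => rw [cstW_refl]; rfl
  | succ k ih =>
      show e (m + k + 1) (cstW _ (X' (m + 1 + k) (XiterN X' k (m + 1) h))) = _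
      have h1 : cstW (show m+1+k+1 = m+k+1+1 from congrArg (· + 1) (by omega))
          (X' (m + 1 + k) (XiterN X' k (m + 1) h))
          = X' (m + k + 1) (cstW (show m+1+k = m+k+1 by omega) (XiterN X' k (m + 1) h)) :=
        cstW_X X' _ _
      rw [h1, he (m + k), ih]
      rfl
end transferAux

/-- if `W = ⊕_{n ≥ b} W_n` is a graded left `R[x,f]`-module, `(g_i)_{i∈I}` a
family in `W_b`, and `W' = Ext(W; (g_i); 1)` the 1-place extension of `W` by `(g_i)` — here
`W k` denotes the component of degree `b + k`, `W' 0 = V/f⁻¹(K)` is the new component of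
degree `b - 1` (`π` being the canonical map `V = ⊕_{i∈I} R → V/f⁻¹(K)`, whose kernel is
`f⁻¹(K) = {v : Σᵢ vᵢ^p gᵢ = 0}`), `W' (k+1) ≅ W k` compatibly with the `x`-actions, and
`x·π(v) = Σᵢ vᵢ^p gᵢ` — then: if `W` is `a`-testable, so is `W'`. -/
theorem onePlaceExtension_isTestable
    (R : Type) [CommRing R] [IsNoetherianRing R] (p : ℕ) [Fact p.Prime] [CharP R p]
    (a : R) (I : Type)
    (W : ℕ → Type) [∀ n, AddCommGroup (W n)] [∀ n, Module R (W n)]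
    (X : ∀ n, W n →+ W (n + 1))
    (hX : ∀ (n : ℕ) (r : R) (h : W n), X n (r • h) = r ^ p • X n h)
    (g : I → W 0)
    (W' : ℕ → Type) [∀ n, AddCommGroup (W' n)] [∀ n, Module R (W' n)]
    (X' : ∀ n, W' n →+ W' (n + 1))
    (hX' : ∀ (n : ℕ) (r : R) (h : W' n), X' n (r • h) = r ^ p • X' n h)
    (e : ∀ k, W' (k + 1) ≃ₗ[R] W k)
    (he : ∀ (k : ℕ) (w : W' (k + 1)), e (k + 1) (X' (k + 1) w) = X k (e k w))
    (π : (I →₀ R) →ₗ[R] W' 0) (hπ : Function.Surjective π)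
    (hker : ∀ v : I →₀ R, π v = 0 ↔ (v.sum fun i c => c ^ p • g i) = 0)
    (hx0 : ∀ v : I →₀ R, e 0 (X' 0 (π v)) = v.sum fun i c => c ^ p • g i)
    (htest : IsTestableN R X a) :
    IsTestableN R X' a := by
  have hp : 0 < p := (Fact.out : p.Prime).pos
  intro n h c hc hcN k
  obtain ⟨N, hN⟩ := hcN
  match n with
  | Nat.succ m =>
      -- transfer everything through e m
      have key : ∀ j : ℕ, a • XiterN X j m (e m h) = 0 := by
        apply htest m (e m h) c hc
        refine ⟨N, fun j hj => ?_⟩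
        rw [← etransfer X X' e he j m h, ← map_smul, ← cstW_smul, hN j hj, cstW_zero, map_zero]
      -- pull back to W'
      have h1 : cstW (show m + 1 + k = m + k + 1 by omega)
          (a • XiterN X' k (m + 1) h) = 0 := by
        rw [← (e (m + k)).map_eq_zero_iff, cstW_smul, map_smul,
          etransfer X X' e he k m h, key k]
      rwa [cstW_eq_zero] at h1
  | 0 =>
      obtain ⟨v, rfl⟩ := hπ h
      set w : W 0 := v.sum fun i c => c ^ p • g i with hw
      have hew : e 0 (X' 0 (π v)) = w := hx0 v
      have key : ∀ j : ℕ, a • XiterN X j 0 w = 0 := by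
        apply htest 0 w c hc
        refine ⟨N, fun j hj => ?_⟩
        have h2 : c • XiterN X' j (0 + 1) (X' 0 (π v)) = 0 := by
          have h3 := hN (j + 1) (by omega)
          rw [XiterN_succ' X' j 0 (π v), ← cstW_smul, cstW_eq_zero] at h3
          exact h3
        rw [← hew, ← etransfer X X' e he j 0 (X' 0 (π v)), ← map_smul, ← cstW_smul, h2, cstW_zero, map_zero]
      match k with
      | Nat.succ j =>
          have h2 : a • XiterN X' j (0 + 1) (X' 0 (π v)) = 0 := by
            rw [← (cstW_eq_zero (show 0 + 1 + j = 0 + j + 1 by omega) _),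
              ← ((e (0 + j)).map_eq_zero_iff), cstW_smul, map_smul,
              etransfer X X' e he j 0 (X' 0 (π v)), hew, key j]
          rw [XiterN_succ' X' j 0 (π v), ← cstW_smul, h2, cstW_zero]
      | 0 =>
          show a • π v = 0
          rw [← map_smul, hker]
          have hsum : ((a • v).sum fun i c => c ^ p • g i) = a ^ p • w := by
            rw [hw, Finsupp.smul_sum]
            rw [Finsupp.sum_smul_index' (fun i => by simp [zero_pow hp.ne'])]
            exact Finsupp.sum_congr fun i _ => by rw [smul_eq_mul, mul_pow, mul_smul]
          rw [hsum]
          have := key 0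
          have haw : a • w = 0 := this
          calc a ^ p • w = a ^ (p - 1) • (a • w) := by
                rw [← mul_smul, ← pow_succ, Nat.sub_add_cancel hp]
            _ = 0 := by rw [haw, smul_zero]
end

section
/- Let R be a commutative Noetherian ring of prime characteristic p. If R is F-pure, then for every R-module N, the left R[x,f]-module R[x,f] ⊗_R N is x-torsion-free. -/
open scoped TensorProduct

/-- `Rxⁿ`, the `n`-th graded component of the Frobenius skew polynomial ring `R[x,f]`:
a copy of `R` viewed as an `R`-algebra via `iterateFrobenius R p n`, so that `Rxⁿ ⊗_R N`
is `FrobTwist R p n ⊗[R] N`, with `r xⁿ ⊗ g` corresponding to `r ⊗ g`. -/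
def FrobTwist (R : Type) (p n : ℕ) : Type := R

instance (R : Type) (p n : ℕ) [CommRing R] : CommRing (FrobTwist R p n) :=
  inferInstanceAs (CommRing R)

instance (R : Type) (p n : ℕ) [CommRing R] [Fact p.Prime] [CharP R p] :
    Algebra R (FrobTwist R p n) :=
  (show R →+* FrobTwist R p n from iterateFrobenius R p n).toAlgebra

/-- The identity map `FrobTwist R p n → R`. -/
def FrobTwist.un {R : Type} {p n : ℕ} (a : FrobTwist R p n) : R := a

/-- The identity map `R → FrobTwist R p n`. -/
def FrobTwist.mk (R : Type) (p n : ℕ) (a : R) : FrobTwist R p n := a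

/-- `R` is `F`-pure if for every `R`-module `N` the map `ψ_N : N → Rx ⊗_R N`,
`g ↦ x ⊗ g`, is injective. -/
def IsFPure (R : Type) [CommRing R] (p : ℕ) [Fact p.Prime] [CharP R p] : Prop :=
  ∀ (N : Type) [AddCommGroup N] [Module R N],
    Function.Injective fun g : N => (1 : FrobTwist R p 1) ⊗ₜ[R] g

/-- The map `a ↦ a^p : Rxⁿ → Rxⁿ⁺¹` is `R`-linear. -/
def frobPow (R : Type) (p n : ℕ) [CommRing R] [Fact p.Prime] [CharP R p] :
    FrobTwist R p n →ₗ[R] FrobTwist R p (n + 1) where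
  toFun a := FrobTwist.mk R p (n + 1) (a.un ^ p)
  map_add' a b := by
    show FrobTwist.mk R p (n + 1) ((a.un + b.un) ^ p)
      = FrobTwist.mk R p (n + 1) (a.un ^ p + b.un ^ p)
    rw [add_pow_char]
  map_smul' r a := by
    show FrobTwist.mk R p (n + 1) ((r ^ p ^ n * a.un) ^ p)
      = FrobTwist.mk R p (n + 1) (r ^ p ^ (n + 1) * a.un ^ p)
    rw [mul_pow, ← pow_mul, ← pow_succ]

/-- The action of `x` on the `n`-th graded component `Rxⁿ ⊗_R N` of `R[x,f] ⊗_R N`: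
`r xⁿ ⊗ g ↦ r^p xⁿ⁺¹ ⊗ g`. -/
noncomputable def tensorX (R : Type) (p : ℕ) [CommRing R] [Fact p.Prime] [CharP R p]
    (N : Type) [AddCommGroup N] [Module R N] (n : ℕ) :
    FrobTwist R p n ⊗[R] N →+ FrobTwist R p (n + 1) ⊗[R] N :=
  (TensorProduct.map (frobPow R p n) LinearMap.id).toAddMonoidHom

section Aux

variable (R : Type) [CommRing R] (p : ℕ) [Fact p.Prime] [CharP R p]
variable (N : Type) [AddCommGroup N] [Module R N]

lemma FrobTwist.smul_def {n : ℕ} (r : R) (a : FrobTwist R p n) :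
    r • a = FrobTwist.mk R p n (r ^ p ^ n * FrobTwist.un a) := rfl

lemma FrobTwist.un_one {n : ℕ} : FrobTwist.un (1 : FrobTwist R p n) = 1 := rfl

lemma FrobTwist.un_add {n : ℕ} (a b : FrobTwist R p n) :
    FrobTwist.un (a + b) = FrobTwist.un a + FrobTwist.un b := rfl

lemma FrobTwist.mk_add {n : ℕ} (a b : R) :
    FrobTwist.mk R p n (a + b) = FrobTwist.mk R p n a + FrobTwist.mk R p n b := rfl

/-- `Rxⁿ ⊗ N` viewed as an `R`-module via multiplication on the first factor
(i.e. as a module over the ring `FrobTwist R p n`, which is `R`). -/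
def Comp (n : ℕ) : Type := FrobTwist R p n ⊗[R] N

noncomputable instance (n : ℕ) : AddCommGroup (Comp R p N n) :=
  inferInstanceAs (AddCommGroup (FrobTwist R p n ⊗[R] N))

noncomputable instance (n : ℕ) : Module R (Comp R p N n) :=
  inferInstanceAs (Module (FrobTwist R p n) (FrobTwist R p n ⊗[R] N))

/-- Identity map into `Comp`. -/
def Comp.mk (n : ℕ) (x : FrobTwist R p n ⊗[R] N) : Comp R p N n := x

lemma Comp.mk_add (n : ℕ) (x y : FrobTwist R p n ⊗[R] N) :
    Comp.mk R p N n (x + y) = Comp.mk R p N n x + Comp.mk R p N n y := rfl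

lemma Comp.mk_zero (n : ℕ) : Comp.mk R p N n 0 = 0 := rfl

lemma Comp.mk_inj (n : ℕ) {x y : FrobTwist R p n ⊗[R] N}
    (h : Comp.mk R p N n x = Comp.mk R p N n y) : x = y := h

lemma Comp.smul_mk (n : ℕ) (c a : FrobTwist R p n) (g : N) :
    FrobTwist.un c • Comp.mk R p N n (a ⊗ₜ[R] g)
      = Comp.mk R p N n ((c * a) ⊗ₜ[R] g) := by
  show c • (a ⊗ₜ[R] g) = (c * a) ⊗ₜ[R] g
  rw [TensorProduct.smul_tmul', smul_eq_mul]

/-- The comparison map `Rxⁿ⁺¹ ⊗ N → Rx ⊗ (Rxⁿ ⊗ N)`, `b ⊗ g ↦ b ⊗ (1 ⊗ g)`. -/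
noncomputable def theta (n : ℕ) :
    FrobTwist R p (n + 1) ⊗[R] N →+ FrobTwist R p 1 ⊗[R] Comp R p N n :=
  TensorProduct.liftAddHom
    (AddMonoidHom.mk'
      (fun b => AddMonoidHom.mk'
        (fun g => FrobTwist.mk R p 1 (FrobTwist.un b) ⊗ₜ[R]
          Comp.mk R p N n ((1 : FrobTwist R p n) ⊗ₜ[R] g))
        (by
          intro g g'
          simp only [TensorProduct.tmul_add, Comp.mk_add]))
      (by
        intro b b'
        ext g
        simp only [AddMonoidHom.mk'_apply, AddMonoidHom.add_apply,
          FrobTwist.un_add, FrobTwist.mk_add, TensorProduct.add_tmul]))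
    (by
      intro r b g
      simp only [AddMonoidHom.mk'_apply]
      rw [← TensorProduct.smul_tmul r (1 : FrobTwist R p n) g,
        FrobTwist.smul_def R p r (1 : FrobTwist R p n), FrobTwist.un_one, mul_one]
      have h1 : Comp.mk R p N n (FrobTwist.mk R p n (r ^ p ^ n) ⊗ₜ[R] g)
          = FrobTwist.un (FrobTwist.mk R p n (r ^ p ^ n)) •
              Comp.mk R p N n ((1 : FrobTwist R p n) ⊗ₜ[R] g) := by
        rw [Comp.smul_mk, mul_one]
      rw [h1, TensorProduct.tmul_smul, TensorProduct.smul_tmul']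
      have h2 : FrobTwist.un (FrobTwist.mk R p n (r ^ p ^ n)) •
            FrobTwist.mk R p 1 (FrobTwist.un b)
          = FrobTwist.mk R p 1 (FrobTwist.un (r • b)) := by
        rw [FrobTwist.smul_def]
        show FrobTwist.mk R p 1 ((r ^ p ^ n) ^ p ^ 1 * FrobTwist.un b) = _
        rw [pow_one, ← pow_mul, ← pow_succ]
        rfl
      rw [h2])

lemma theta_tensorX (n : ℕ) (h : FrobTwist R p n ⊗[R] N) :
    theta R p N n (tensorX R p N n h)
      = (1 : FrobTwist R p 1) ⊗ₜ[R] Comp.mk R p N n h := by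
  induction h using TensorProduct.induction_on with
  | zero => simp [Comp.mk_zero, TensorProduct.tmul_zero]
  | tmul a g =>
    have e1 : tensorX R p N n (a ⊗ₜ[R] g)
        = FrobTwist.mk R p (n + 1) (FrobTwist.un a ^ p) ⊗ₜ[R] g := by
      show TensorProduct.map (frobPow R p n) LinearMap.id (a ⊗ₜ[R] g) = _
      rw [TensorProduct.map_tmul]
      rfl
    rw [e1]
    have e2 : theta R p N n (FrobTwist.mk R p (n + 1) (FrobTwist.un a ^ p) ⊗ₜ[R] g)
        = FrobTwist.mk R p 1 (FrobTwist.un (FrobTwist.mk R p (n + 1)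
            (FrobTwist.un a ^ p))) ⊗ₜ[R]
          Comp.mk R p N n ((1 : FrobTwist R p n) ⊗ₜ[R] g) :=
      TensorProduct.liftAddHom_tmul _ _ _ _
    rw [e2]
    have h3 : Comp.mk R p N n (a ⊗ₜ[R] g)
        = FrobTwist.un a • Comp.mk R p N n ((1 : FrobTwist R p n) ⊗ₜ[R] g) := by
      rw [Comp.smul_mk, mul_one]
    rw [h3, TensorProduct.tmul_smul, TensorProduct.smul_tmul']
    have h4 : FrobTwist.un a • (1 : FrobTwist R p 1)
        = FrobTwist.mk R p 1 (FrobTwist.un (FrobTwist.mk R p (n + 1)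
            (FrobTwist.un a ^ p))) := by
      rw [FrobTwist.smul_def, FrobTwist.un_one, mul_one, pow_one]
      rfl
    rw [h4]
  | add x y hx hy =>
    rw [map_add, map_add, hx, hy, Comp.mk_add, TensorProduct.tmul_add]

lemma tensorX_injective (hFP : IsFPure R p) (n : ℕ) :
    Function.Injective ⇑(tensorX R p N n) := by
  intro h h' e
  have key := hFP (Comp R p N n)
  have e2 : (1 : FrobTwist R p 1) ⊗ₜ[R] Comp.mk R p N n h
      = (1 : FrobTwist R p 1) ⊗ₜ[R] Comp.mk R p N n h' := by
    rw [← theta_tensorX, ← theta_tensorX, e]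
  exact Comp.mk_inj R p N n (key e2)

end Aux

/-- if `R` is `F`-pure, then for every `R`-module `N` the left
`R[x,f]`-module `R[x,f] ⊗_R N = ⊕ₙ Rxⁿ ⊗_R N` is `x`-torsion-free (no nonzero
homogeneous element is killed by a power of `x`). -/
theorem tensor_xTorsionFree_of_isFPure (R : Type) [CommRing R] [IsNoetherianRing R]
    (p : ℕ) [Fact p.Prime] [CharP R p] (hFP : IsFPure R p)
    (N : Type) [AddCommGroup N] [Module R N] :
    ∀ (n : ℕ) (h : FrobTwist R p n ⊗[R] N),
      (∃ k : ℕ, 1 ≤ k ∧ XiterN (tensorX R p N) k n h = 0) → h = 0 := by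
  have hinj : ∀ (k n : ℕ), Function.Injective ⇑(XiterN (tensorX R p N) k n) := by
    intro k
    induction k with
    | zero => intro n; exact fun _ _ e => e
    | succ k ih =>
      intro n
      show Function.Injective ⇑((tensorX R p N (n + k)).comp (XiterN (tensorX R p N) k n))
      rw [AddMonoidHom.coe_comp]
      exact (tensorX_injective R p N hFP (n + k)).comp (ih n)
  rintro n h ⟨k, -, hk⟩
  have : XiterN (tensorX R p N) k n h = XiterN (tensorX R p N) k n 0 := by
    rw [hk, map_zero]
  exact hinj k n this
end
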